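/- The max-margin classifier over the feature-replicated distribution is w̃_MM = (2/(d+1), ..., 2/(d+1)) ∈ ℝ^{d+1}, which minimizes (1/2)‖w̃‖₂² subject to y·⟨w̃,x̃⟩ ≥ 1 over the replicated support. -/

import Mathlib

lemma sum_if_aux (d : ℕ) (a b : ℝ) :
    ∑ i : Fin (d + 1), (if (i : ℕ) < d then a else b) = d * a + b := by
  rw [Fin.sum_univ_castSucc]
  simp [Fin.is_lt]

/-- The constant vector 2/(d+1) is the max-margin classifier over the
    feature-replicated distribution: it satisfies the margin constraint and uniquely
    minimizes (1/2)‖w̃‖₂² among all w̃ satisfying the constraint. -/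
theorem replicated_max_margin (d : ℕ) (hd : 1 ≤ d) :
    (∀ (y n₁ n₂ : ℝ), (y = 1 ∨ y = -1) →
        n₁ ∈ Set.Icc (-(1:ℝ)/2) (1/2) → n₂ ∈ Set.Icc (-(1:ℝ)/2) (1/2) →
        y * (∑ i : Fin (d + 1), (2 / ((d : ℝ) + 1)) *
            (if (i : ℕ) < d then y + n₁ else y + n₂)) ≥ 1) ∧
    (∀ w : Fin (d + 1) → ℝ,
      (∀ (y n₁ n₂ : ℝ), (y = 1 ∨ y = -1) →
        n₁ ∈ Set.Icc (-(1:ℝ)/2) (1/2) → n₂ ∈ Set.Icc (-(1:ℝ)/2) (1/2) →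
        y * (∑ i : Fin (d + 1), w i * (if (i : ℕ) < d then y + n₁ else y + n₂)) ≥ 1) →
      (1 / 2) * (∑ i : Fin (d + 1), (w i) ^ 2) ≥
        (1 / 2) * (∑ i : Fin (d + 1), (2 / ((d : ℝ) + 1)) ^ 2) ∧
      ((1 / 2) * (∑ i : Fin (d + 1), (w i) ^ 2) =
          (1 / 2) * (∑ i : Fin (d + 1), (2 / ((d : ℝ) + 1)) ^ 2) →
        ∀ i, w i = 2 / ((d : ℝ) + 1))) := by
  have hd0 : (0:ℝ) ≤ d := Nat.cast_nonneg d
  have hd1 : (0:ℝ) < (d:ℝ) + 1 := by linarith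
  set c : ℝ := 2 / ((d:ℝ) + 1) with hc_def
  have hc : ((d:ℝ) + 1) * c = 2 := by rw [hc_def]; field_simp [hd1.ne']
  have hc0 : 0 < c := by positivity
  have hsum_c : ∑ _i : Fin (d + 1), c ^ 2 = ((d:ℝ) + 1) * c ^ 2 := by
    rw [Finset.sum_const, Finset.card_univ, Fintype.card_fin]
    push_cast; ring
  constructor
  · intro y n₁ n₂ hy hn₁ hn₂
    obtain ⟨h1l, h1r⟩ := hn₁
    obtain ⟨h2l, h2r⟩ := hn₂
    rw [← Finset.mul_sum, sum_if_aux]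
    rcases hy with rfl | rfl
    · nlinarith [mul_nonneg hd0 (by linarith : (0:ℝ) ≤ n₁ + 1/2),
        mul_nonneg hd0 hc0.le, mul_nonneg (mul_nonneg hd0 (by linarith : (0:ℝ) ≤ n₁ + 1/2)) hc0.le]
    · nlinarith [mul_nonneg hd0 (by linarith : (0:ℝ) ≤ 1/2 - n₁),
        mul_nonneg (mul_nonneg hd0 (by linarith : (0:ℝ) ≤ 1/2 - n₁)) hc0.le]
  · intro w hw
    have hS : (∑ i : Fin (d+1), w i) ≥ 2 := by
      have h := hw 1 (-(1/2)) (-(1/2)) (Or.inl rfl) (by norm_num) (by norm_num)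
      have hs : (∑ i : Fin (d+1), w i * (if (i : ℕ) < d then (1:ℝ) + -(1/2) else 1 + -(1/2)))
          = (∑ i : Fin (d+1), w i) * (1/2) := by
        rw [Finset.sum_mul]
        exact Finset.sum_congr rfl (fun i _ => by norm_num)
      rw [hs] at h
      linarith
    set S := ∑ i : Fin (d+1), w i with hS_def
    have expand : ∑ i : Fin (d+1), (w i - c)^2
        = (∑ i : Fin (d+1), (w i)^2) - 2*c*S + ((d:ℝ)+1)*c^2 := by
      have h : ∀ i : Fin (d+1), (w i - c)^2 = (w i)^2 - 2*c*(w i) + c^2 := fun i => by ring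
      simp_rw [h, Finset.sum_add_distrib, Finset.sum_sub_distrib, ← Finset.mul_sum,
        Finset.sum_const, Finset.card_univ, Fintype.card_fin]
      push_cast; ring
    have key : 0 ≤ ∑ i : Fin (d+1), (w i - c)^2 :=
      Finset.sum_nonneg (fun i _ => sq_nonneg _)
    constructor
    · rw [hsum_c]
      nlinarith [mul_nonneg hc0.le (by linarith : (0:ℝ) ≤ S - 2)]
    · intro heq i
      rw [hsum_c] at heq
      have hsq : (∑ i : Fin (d+1), (w i)^2) = ((d:ℝ)+1)*c^2 := by linarith
      have hzero : ∑ i : Fin (d+1), (w i - c)^2 = 0 := by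
        have hle : ∑ i : Fin (d+1), (w i - c)^2 ≤ 0 := by
          rw [expand, hsq]
          nlinarith [mul_nonneg hc0.le (by linarith : (0:ℝ) ≤ S - 2)]
        linarith
      have := (Finset.sum_eq_zero_iff_of_nonneg (fun i _ => sq_nonneg (w i - c))).mp hzero
        i (Finset.mem_univ i)
      have := pow_eq_zero_iff (n := 2) (by norm_num) |>.mp this
      linarith [sub_eq_zero.mp this]
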